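/- Let c > 0 and μ ∈ ℝ. The uniform density u(x) = c·1_{[μ−1/(2c), μ+1/(2c)]}(x) is a probability density with 0 ≤ u ≤ c, mean μ, and variance exactly 1/(12·c²). Moreover, if f : ℝ → ℝ is any measurable probability density with 0 ≤ f(x) ≤ c for all x, mean μ, and variance equal to 1/(12·c²), then f(x) = u(x) for Lebesgue-almost every x ∈ ℝ. -/

import Mathlib

open MeasureTheory

/-- The uniform density `u = c · 1_{[μ−1/(2c), μ+1/(2c)]}`. -/
noncomputable def unifDensity (c μ : ℝ) (x : ℝ) : ℝ :=
  if x ∈ Set.Icc (μ - 1 / (2 * c)) (μ + 1 / (2 * c)) then c else 0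

section helpers
variable (c μ : ℝ)

lemma unif_mul_eq_indicator (g : ℝ → ℝ) :
    (fun x => g x * unifDensity c μ x)
      = (Set.Icc (μ - 1/(2*c)) (μ + 1/(2*c))).indicator (fun x => g x * c) := by
  ext x
  simp only [unifDensity, Set.indicator_apply]
  split <;> simp

lemma unif_integral (hc : 0 < c) (g : ℝ → ℝ) :
    (∫ x, g x * unifDensity c μ x)
      = ∫ x in (μ - 1/(2*c))..(μ + 1/(2*c)), g x * c := by
  have hle : μ - 1/(2*c) ≤ μ + 1/(2*c) := by
    have : 0 ≤ 1/(2*c) := by positivity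
    linarith
  rw [unif_mul_eq_indicator, integral_indicator measurableSet_Icc,
    integral_Icc_eq_integral_Ioc, intervalIntegral.integral_of_le hle]

lemma unif_integrable_mul (g : ℝ → ℝ) (hg : Continuous g) :
    Integrable (fun x => g x * unifDensity c μ x) := by
  rw [unif_mul_eq_indicator]
  rw [integrable_indicator_iff measurableSet_Icc]
  exact ((hg.mul continuous_const).integrableOn_Icc)

lemma unif_int_one (hc : 0 < c) : (∫ x, unifDensity c μ x) = 1 := by
  have := unif_integral c μ hc (fun _ => 1)
  simp only [one_mul] at this
  rw [show (fun x => unifDensity c μ x) = fun x => (1:ℝ) * unifDensity c μ x by simp] at *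
  rw [this, intervalIntegral.integral_const, smul_eq_mul]
  have h2c : (2*c) ≠ 0 := by positivity
  field_simp
  norm_num

lemma unif_mean (hc : 0 < c) : (∫ x, x * unifDensity c μ x) = μ := by
  rw [unif_integral c μ hc (fun x => x), intervalIntegral.integral_mul_const, integral_id]
  have h2c : (2*c) ≠ 0 := by positivity
  field_simp
  ring

lemma unif_var (hc : 0 < c) : (∫ x, (x - μ)^2 * unifDensity c μ x) = 1/(12*c^2) := by
  rw [unif_integral c μ hc (fun x => (x-μ)^2), intervalIntegral.integral_mul_const,
    intervalIntegral.integral_comp_sub_right (fun t => t^2) μ]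
  simp only [integral_pow]
  have h2c : (2*c) ≠ 0 := by positivity
  field_simp
  ring
  rw [← mul_pow, mul_inv_cancel₀ hc.ne']; ring

end helpers

/-- The uniform density `u = c·1_{[μ−1/(2c),μ+1/(2c)]}` is a probability
density bounded by `c`, with mean `μ` and variance exactly `1/(12c²)`;
moreover, it is the almost-everywhere unique such density attaining this
minimal variance. -/
theorem uniform_unique_minimal_variance (c μ : ℝ) (hc : 0 < c) :
    (∀ x, 0 ≤ unifDensity c μ x ∧ unifDensity c μ x ≤ c)
    ∧ (∫ x, unifDensity c μ x) = 1
    ∧ (∫ x, x * unifDensity c μ x) = μ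
    ∧ (∫ x, (x - μ) ^ 2 * unifDensity c μ x) = 1 / (12 * c ^ 2)
    ∧ (∀ f : ℝ → ℝ, Measurable f → (∀ x, 0 ≤ f x) → (∀ x, f x ≤ c) →
        (∫ x, f x) = 1 →
        (Integrable fun x => x * f x) → (Integrable fun x => x ^ 2 * f x) →
        (∫ x, x * f x) = μ →
        (∫ x, (x - μ) ^ 2 * f x) = 1 / (12 * c ^ 2) →
        f =ᵐ[volume] unifDensity c μ) := by
  have hcne : c ≠ 0 := ne_of_gt hc
  have h2c : (2*c) ≠ 0 := by positivity
  refine ⟨?_, unif_int_one c μ hc, unif_mean c μ hc, unif_var c μ hc, ?_⟩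
  · intro x
    unfold unifDensity
    split <;> constructor <;> first | positivity | exact le_refl c | exact le_of_lt hc
  · intro f hfm hf0 hfc hfint1 hxf hx2f hmean hvar
    set a : ℝ := 1 / (2 * c) with ha
    have ha0 : 0 < a := by positivity
    -- f is integrable
    have hfint : Integrable f := by
      by_contra h
      rw [integral_undef h] at hfint1
      norm_num at hfint1
    -- integrability of (x-μ)² f
    have hA : Integrable (fun x => (x - μ)^2 * f x) := by
      have : (fun x => (x - μ)^2 * f x)
          = fun x => (x^2 * f x - (2*μ) * (x * f x)) + μ^2 * f x := by
        ext x; ring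
      rw [this]
      exact ((hx2f.sub (hxf.const_mul (2*μ))).add (hfint.const_mul (μ^2)))
    -- integrability of u-related functions
    have hUint : Integrable (unifDensity c μ) := by
      have := unif_integrable_mul c μ (fun _ => 1) continuous_const
      simpa using this
    have hU2 : Integrable (fun x => (x - μ)^2 * unifDensity c μ x) :=
      unif_integrable_mul c μ _ (by continuity)
    -- the nonnegative function h
    set h : ℝ → ℝ := fun x => ((x - μ)^2 - a^2) * (f x - unifDensity c μ x) with hh
    have hnonneg : 0 ≤ h := by
      intro x
      simp only [hh, Pi.zero_apply]
      by_cases hx : x ∈ Set.Icc (μ - 1 / (2 * c)) (μ + 1 / (2 * c))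
      · have hux : unifDensity c μ x = c := by unfold unifDensity; rw [if_pos hx]
        obtain ⟨h1, h2⟩ := hx
        have hsq : (x - μ)^2 ≤ a^2 := by nlinarith [ha0.le]
        have : f x ≤ c := hfc x
        nlinarith
      · have hux : unifDensity c μ x = 0 := by unfold unifDensity; rw [if_neg hx]
        rw [Set.mem_Icc, not_and_or, not_le, not_le] at hx
        have hsq : a^2 ≤ (x - μ)^2 := by
          rcases hx with hx | hx <;> nlinarith [ha0.le]
        have := hf0 x
        nlinarith
    have hheq : h = fun x => ((x - μ)^2 * f x - a^2 * f x)
        - ((x - μ)^2 * unifDensity c μ x - a^2 * unifDensity c μ x) := by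
      ext x; simp only [hh]; ring
    have hI1 : Integrable (fun x => (x - μ)^2 * f x - a^2 * f x) :=
      hA.sub (hfint.const_mul (a^2))
    have hI2 : Integrable (fun x => (x - μ)^2 * unifDensity c μ x - a^2 * unifDensity c μ x) :=
      hU2.sub (hUint.const_mul (a^2))
    have hhint : Integrable h := by
      rw [hheq]; exact hI1.sub hI2
    have hhzero : (∫ x, h x) = 0 := by
      rw [hheq]
      rw [integral_sub hI1 hI2,
        integral_sub hA (hfint.const_mul (a^2)), integral_sub hU2 (hUint.const_mul (a^2)),
        integral_const_mul, integral_const_mul, hvar, hfint1, unif_var c μ hc, unif_int_one c μ hc]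
      ring
    have hae : h =ᵐ[volume] 0 :=
      (integral_eq_zero_iff_of_nonneg hnonneg hhint).mp hhzero
    have hne1 : ∀ᵐ x : ℝ, x ≠ μ - a := by
      rw [ae_iff]
      simpa using measure_singleton (μ - a)
    have hne2 : ∀ᵐ x : ℝ, x ≠ μ + a := by
      rw [ae_iff]
      simpa using measure_singleton (μ + a)
    filter_upwards [hae, hne1, hne2] with x hx hx1 hx2
    simp only [hh, Pi.zero_apply] at hx
    have hfac : (x - μ)^2 - a^2 ≠ 0 := by
      intro heq
      have : (x - (μ + a)) * (x - (μ - a)) = 0 := by nlinarith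
      rcases mul_eq_zero.mp this with h' | h'
      · exact hx2 (by linarith [sub_eq_zero.mp h'])
      · exact hx1 (by linarith [sub_eq_zero.mp h'])
    rcases mul_eq_zero.mp hx with h' | h'
    · exact absurd h' hfac
    · linarith [sub_eq_zero.mp h']
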